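/- Let A and B be non-commuting symmetric matrices in GL₂(ℤ), and define a sequence (y_k)_{k ≥ -1} of 2×2 integer matrices by y_{-1} = B⁻¹, y_0 = I, y_1 = A and y_k = -y_{k-1}·J·y_{k-3}·J·y_{k-1} for k ≥ 2, where J = [[0,1],[-1,0]]. Then each y_k is symmetric with |det(y_k)| = 1, and for all k ≥ -1 (identifying symmetric matrices with triples), |det(y_k, y_{k+1}, y_{k+2})| = |trace(J·A·B)| ≠ 0. -/
import Mathlib


open Matrix

def Jmat : Matrix (Fin 2) (Fin 2) ℤ := !![0, 1; -1, 0]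

def ofMat (m : Matrix (Fin 2) (Fin 2) ℤ) : Fin 3 → ℤ := ![m 0 0, m 0 1, m 1 1]

def det3 (x y z : Fin 3 → ℤ) : ℤ :=
  (!![x 0, x 1, x 2; y 0, y 1, y 2; z 0, z 1, z 2]).det

lemma symm_eta {M : Matrix (Fin 2) (Fin 2) ℤ} (h : M.IsSymm) :
    M = !![M 0 0, M 0 1; M 0 1, M 1 1] := by
  have h10 : M 1 0 = M 0 1 := by
    have := congrFun (congrFun h 1) 0
    simpa [Matrix.transpose_apply] using this.symm
  ext i j
  fin_cases i <;> fin_cases j <;> simp [h10]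

lemma Jmat_transpose : Jmatᵀ = -Jmat := by
  ext i j; fin_cases i <;> fin_cases j <;> simp [Jmat]

lemma Jmat_det : Jmat.det = 1 := by simp [Jmat]

lemma ring_inverse_neg_one : Ring.inverse (-1 : ℤ) = -1 := by
  simpa using Ring.inverse_unit (-1 : ℤˣ)

/-- The key polynomial identity for one step of the recursion. -/
lemma step_det3 (a0 a1 a2 b0 b1 b2 c0 c1 c2 : ℤ) :
    det3 (ofMat !![b0, b1; b1, b2]) (ofMat !![c0, c1; c1, c2])
        (ofMat (-(!![c0, c1; c1, c2] * Jmat * !![a0, a1; a1, a2] * Jmat *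
          !![c0, c1; c1, c2]))) =
      -(!![c0, c1; c1, c2]).det *
        det3 (ofMat !![a0, a1; a1, a2]) (ofMat !![b0, b1; b1, b2])
          (ofMat !![c0, c1; c1, c2]) := by
  simp [det3, ofMat, Jmat, Matrix.det_fin_three, Matrix.det_fin_two, Matrix.mul_apply,
    Fin.sum_univ_two]
  ring

lemma base_det3 (a0 a1 a2 b0 b1 b2 : ℤ) :
    det3 (ofMat !![b2, -b1; -b1, b0]) (ofMat (1 : Matrix (Fin 2) (Fin 2) ℤ))
        (ofMat !![a0, a1; a1, a2]) =
      (Jmat * !![a0, a1; a1, a2] * !![b0, b1; b1, b2]).trace := by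
  simp [det3, ofMat, Jmat, Matrix.det_fin_three, Matrix.trace_fin_two, Matrix.mul_apply,
    Fin.sum_univ_two, Matrix.one_apply]
  ring

lemma det3_smul_left (c : ℤ) (x y z : Fin 3 → ℤ) :
    det3 (c • x) y z = c * det3 x y z := by
  simp [det3, Matrix.det_fin_three]; ring

lemma ofMat_smul (c : ℤ) (M : Matrix (Fin 2) (Fin 2) ℤ) :
    ofMat (c • M) = c • ofMat M := by
  funext i; fin_cases i <;> simp [ofMat]

lemma base_full (a0 a1 a2 b0 b1 b2 : ℤ)
    (hu : IsUnit (!![b0, b1; b1, b2] : Matrix (Fin 2) (Fin 2) ℤ).det) :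
    |det3 (ofMat (!![b0, b1; b1, b2] : Matrix (Fin 2) (Fin 2) ℤ)⁻¹)
        (ofMat (1 : Matrix (Fin 2) (Fin 2) ℤ)) (ofMat !![a0, a1; a1, a2])| =
      |(Jmat * !![a0, a1; a1, a2] * !![b0, b1; b1, b2]).trace| := by
  have hinv : (!![b0, b1; b1, b2] : Matrix (Fin 2) (Fin 2) ℤ)⁻¹ =
      (!![b0, b1; b1, b2] : Matrix (Fin 2) (Fin 2) ℤ).det • !![b2, -b1; -b1, b0] := by
    rw [Matrix.inv_def, Matrix.adjugate_fin_two]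
    rcases Int.isUnit_iff.mp hu with h | h <;> rw [h] <;>
      simp [ring_inverse_neg_one]
  rw [hinv, ofMat_smul, det3_smul_left, abs_mul, base_det3]
  rcases Int.isUnit_iff.mp hu with h | h <;> rw [h] <;> simp

lemma trace_comm (a0 a1 a2 b0 b1 b2 : ℤ)
    (h : (Jmat * !![a0, a1; a1, a2] * !![b0, b1; b1, b2]).trace = 0) :
    !![a0, a1; a1, a2] * !![b0, b1; b1, b2] = !![b0, b1; b1, b2] * !![a0, a1; a1, a2] := by
  simp [Jmat, Matrix.trace_fin_two, Matrix.mul_apply, Fin.sum_univ_two] at h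
  ext i j
  fin_cases i <;> fin_cases j <;>
    simp [Matrix.mul_apply, Fin.sum_univ_two] <;> linarith

/-- The sequence `y` here is shifted by one: `y (k+1)` is the paper's `y_k`. -/
theorem sequence_props (A B : Matrix (Fin 2) (Fin 2) ℤ)
    (hA : A.IsSymm) (hB : B.IsSymm)
    (hdA : IsUnit A.det) (hdB : IsUnit B.det)
    (hAB : A * B ≠ B * A)
    (y : ℕ → Matrix (Fin 2) (Fin 2) ℤ)
    (h0 : y 0 = B⁻¹) (h1 : y 1 = 1) (h2 : y 2 = A)
    (hrec : ∀ k, y (k + 3) = -(y (k + 2) * Jmat * y k * Jmat * y (k + 2))) :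
    (∀ k, (y k).IsSymm ∧ |(y k).det| = 1) ∧
      (Jmat * A * B).trace ≠ 0 ∧
      ∀ k, |det3 (ofMat (y k)) (ofMat (y (k + 1))) (ofMat (y (k + 2)))| =
        |(Jmat * A * B).trace| := by
  have hBinv : Invertible B := B.invertibleOfIsUnitDet hdB
  have h10B : B 1 0 = B 0 1 := by
    have := congrFun (congrFun hB 1) 0
    simpa [Matrix.transpose_apply] using this.symm
  have hBinvSymm : (B⁻¹).IsSymm := by
    rw [Matrix.IsSymm, Matrix.transpose_nonsing_inv, hB]
  have hdBinv : |(B⁻¹).det| = 1 := by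
    rcases Int.isUnit_iff.mp hdB with h | h <;>
      rw [Matrix.det_nonsing_inv, h] <;> simp [ring_inverse_neg_one]
  have hdA' : |A.det| = 1 := by
    rcases Int.isUnit_iff.mp hdA with h | h <;> simp [h]
  have part1 : ∀ k, (y k).IsSymm ∧ |(y k).det| = 1 := by
    intro k
    induction k using Nat.strong_induction_on with
    | _ k ih =>
      match k with
      | 0 => rw [h0]; exact ⟨hBinvSymm, hdBinv⟩
      | 1 => rw [h1]; exact ⟨Matrix.isSymm_one, by simp⟩
      | 2 => rw [h2]; exact ⟨hA, hdA'⟩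
      | (k + 3) =>
        obtain ⟨hs0, hd0⟩ := ih k (by omega)
        obtain ⟨hs2, hd2⟩ := ih (k + 2) (by omega)
        constructor
        · rw [hrec k, Matrix.IsSymm]
          simp [Matrix.transpose_mul, Jmat_transpose, hs0.eq, hs2.eq,
            Matrix.mul_assoc, Matrix.neg_mul, Matrix.mul_neg]
        · rw [hrec k, Matrix.det_neg]
          simp only [Matrix.det_mul, Jmat_det, Fintype.card_fin]
          rw [abs_mul, abs_mul, abs_mul, abs_mul, abs_mul, hd0, hd2]
          simp
  refine ⟨part1, ?_, ?_⟩
  · intro h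
    apply hAB
    rw [symm_eta hA, symm_eta hB] at h ⊢
    exact trace_comm _ _ _ _ _ _ h
  · -- the invariant step, stated abstractly
    have step : ∀ Ma Mb Mc : Matrix (Fin 2) (Fin 2) ℤ, Ma.IsSymm → Mb.IsSymm → Mc.IsSymm →
        det3 (ofMat Mb) (ofMat Mc) (ofMat (-(Mc * Jmat * Ma * Jmat * Mc))) =
          -Mc.det * det3 (ofMat Ma) (ofMat Mb) (ofMat Mc) := by
      intro Ma Mb Mc ha hb hc
      rw [symm_eta ha, symm_eta hb, symm_eta hc]
      exact step_det3 _ _ _ _ _ _ _ _ _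
    have base : |det3 (ofMat (y 0)) (ofMat (y 1)) (ofMat (y 2))| =
        |(Jmat * A * B).trace| := by
      have hu : IsUnit (!![B 0 0, B 0 1; B 0 1, B 1 1] : Matrix (Fin 2) (Fin 2) ℤ).det := by
        rw [← symm_eta hB]; exact hdB
      have := base_full (A 0 0) (A 0 1) (A 1 1) (B 0 0) (B 0 1) (B 1 1) hu
      rw [h0, h1, h2, symm_eta hA, symm_eta hB]
      exact this
    intro k
    induction k with
    | zero => exact base
    | succ k ih =>
      obtain ⟨hs0, hd0⟩ := part1 k
      obtain ⟨hs1, _⟩ := part1 (k + 1)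
      obtain ⟨hs2, hd2⟩ := part1 (k + 2)
      rw [show k + 1 + 2 = k + 3 from rfl, hrec k,
        step (y k) (y (k + 1)) (y (k + 2)) hs0 hs1 hs2, abs_mul, abs_neg, hd2, one_mul, ih]
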